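/- Let 0<p<∞ and φ∈𝒢_p with φ(1)=1 and lim_{t→0+} φ(t)=0. Then 𝔈_G ℳ_{φ,p}(ℝ^n)(t) = ∞ for all t>0 if, and only if, lim_{t→∞} t^{-n/p} φ(t) = 0. -/

import Mathlib

open MeasureTheory Filter Set ENNReal

noncomputable section

abbrev En (n : ℕ) := EuclideanSpace ℝ (Fin n)

/-- The class `𝒢_p`: nondecreasing positive functions on `(0,∞)` such that
`t ↦ φ(t) t^{-n/p}` is nonincreasing. -/
def GClass (n : ℕ) (p : ℝ) (φ : ℝ → ℝ) : Prop :=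
  (∀ t : ℝ, 0 < t → 0 < φ t) ∧
    ∀ t r : ℝ, 0 < t → t ≤ r → φ t ≤ φ r ∧ φ r ≤ φ t * (r / t) ^ ((n : ℝ) / p)

/-- The axis-parallel compact cube centred at `x` with side length `r`. -/
def cube (n : ℕ) (x : En n) (r : ℝ) : Set (En n) := {y | ∀ i, |y i - x i| ≤ r / 2}

/-- The generalised Morrey quasi-norm `‖f | ℳ_{φ,p}(ℝⁿ)‖`. -/
def morreyNorm {F : Type*} [NormedAddCommGroup F] (n : ℕ) (p : ℝ) (φ : ℝ → ℝ)
    (f : En n → F) : ℝ≥0∞ :=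
  ⨆ (x : En n) (r : ℝ) (_ : 0 < r),
    ENNReal.ofReal (φ r) *
      ((volume (cube n x r))⁻¹ *
        ∫⁻ y in cube n x r, ENNReal.ofReal (‖f y‖ ^ p)) ^ (1 / p)

/-- The decreasing rearrangement `f*(t) = inf{σ>0 : |{x : |f(x)|>σ}| ≤ t}`. -/
def rearr {F : Type*} [NormedAddCommGroup F] (n : ℕ) (f : En n → F) (t : ℝ) : ℝ≥0∞ :=
  sInf {σ : ℝ≥0∞ | 0 < σ ∧ volume {x : En n | σ < ENNReal.ofReal ‖f x‖} ≤ ENNReal.ofReal t}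

/-- The growth envelope function of the generalised Morrey space `ℳ_{φ,p}(ℝⁿ)`. -/
def morreyEnvelope (n : ℕ) (p : ℝ) (φ : ℝ → ℝ) (t : ℝ) : ℝ≥0∞ :=
  ⨆ (f : En n → ℝ) (_ : Measurable f) (_ : morreyNorm n p φ f ≤ 1), rearr n f t

end

noncomputable section Helpers

lemma cube_eq_preimage (n : ℕ) (x : En n) (r : ℝ) :
    cube n x r = (MeasurableEquiv.toLp 2 (Fin n → ℝ)).symm ⁻¹'
      (Set.pi Set.univ fun i => Set.Icc (x i - r/2) (x i + r/2)) := by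
  ext y
  simp only [cube, Set.mem_preimage, Set.mem_pi, Set.mem_univ, forall_true_left,
    Set.mem_Icc, Set.mem_setOf_eq, MeasurableEquiv.coe_toLp_symm]
  refine forall_congr' fun i => ?_
  rw [abs_le]
  constructor <;> (rintro ⟨a, b⟩; constructor <;> simp_all <;> linarith)

lemma measurableSet_cube (n : ℕ) (x : En n) (r : ℝ) : MeasurableSet (cube n x r) := by
  rw [cube_eq_preimage]
  exact (MeasurableEquiv.toLp 2 (Fin n → ℝ)).symm.measurable
    (MeasurableSet.univ_pi fun i => measurableSet_Icc)

lemma volume_cube (n : ℕ) (x : En n) {r : ℝ} (hr : 0 ≤ r) :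
    volume (cube n x r) = ENNReal.ofReal (r ^ n) := by
  rw [cube_eq_preimage,
    (EuclideanSpace.volume_preserving_symm_measurableEquiv_toLp (Fin n)).measure_preimage
      ((MeasurableSet.univ_pi fun i => measurableSet_Icc).nullMeasurableSet),
    volume_pi_pi]
  simp only [Real.volume_Icc, show ∀ i : Fin n, x i + r/2 - (x i - r/2) = r from fun i => by ring]
  rw [Finset.prod_const, ENNReal.ofReal_pow hr, Finset.card_univ, Fintype.card_fin]

lemma bound_helper {p a lam m r : ℝ} (hp : 0 < p) (ha : 0 ≤ a) (hlam : 0 ≤ lam) (hm : 0 ≤ m)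
    (hr : 0 < r) (n : ℕ) {V : ℝ≥0∞} (hV : V ≤ ENNReal.ofReal m)
    (key : a * (lam ^ p * m / r ^ n) ^ (1/p) ≤ 1) :
    ENNReal.ofReal a * ((ENNReal.ofReal (r ^ n))⁻¹ *
      (ENNReal.ofReal (lam ^ p) * V)) ^ (1/p) ≤ 1 := by
  have hrn : (0:ℝ) < r ^ n := pow_pos hr n
  have h1 : (ENNReal.ofReal (r ^ n))⁻¹ * (ENNReal.ofReal (lam ^ p) * V) ≤
      ENNReal.ofReal (lam ^ p * m / r ^ n) := by
    calc (ENNReal.ofReal (r ^ n))⁻¹ * (ENNReal.ofReal (lam ^ p) * V) ≤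
        (ENNReal.ofReal (r ^ n))⁻¹ * (ENNReal.ofReal (lam ^ p) * ENNReal.ofReal m) := by gcongr
      _ = ENNReal.ofReal (lam ^ p * m / r ^ n) := by
          rw [← ENNReal.ofReal_inv_of_pos hrn, ← ENNReal.ofReal_mul (Real.rpow_nonneg hlam p),
            ← ENNReal.ofReal_mul (by positivity)]
          rw [div_eq_mul_inv]
          ring_nf
  calc ENNReal.ofReal a * ((ENNReal.ofReal (r ^ n))⁻¹ *
      (ENNReal.ofReal (lam ^ p) * V)) ^ (1/p)
      ≤ ENNReal.ofReal a * (ENNReal.ofReal (lam ^ p * m / r ^ n)) ^ (1/p) := by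
        gcongr
    _ = ENNReal.ofReal a * ENNReal.ofReal ((lam ^ p * m / r ^ n) ^ (1/p)) := by
        rw [ENNReal.ofReal_rpow_of_nonneg (by positivity) (by positivity)]
    _ = ENNReal.ofReal (a * (lam ^ p * m / r ^ n) ^ (1/p)) := by
        rw [ENNReal.ofReal_mul ha]
    _ ≤ 1 := ENNReal.ofReal_le_one.2 key

lemma rpow_self_inv {lam p : ℝ} (hlam : 0 ≤ lam) (hp : 0 < p) : (lam ^ p) ^ (1/p) = lam := by
  rw [← Real.rpow_mul hlam, mul_one_div, div_self hp.ne', Real.rpow_one]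

lemma construction (n : ℕ) (hn : 0 < n) (p : ℝ) (hp : 0 < p) (φ : ℝ → ℝ) (hφ : GClass n p φ)
    (hlim : Filter.Tendsto (fun t : ℝ => φ t / t ^ ((n : ℝ) / p)) Filter.atTop (nhds 0))
    {t ρ : ℝ} (ht : 0 < t) (hρ : 0 < ρ) :
    ENNReal.ofReal (1/(2 * φ ρ)) ≤ morreyEnvelope n p φ t := by
  obtain ⟨hφpos, hφmono⟩ := hφ
  have hφρ : 0 < φ ρ := hφpos ρ hρ
  set lam : ℝ := 1/(2 * φ ρ) with hlam_def
  have hlam : 0 < lam := by positivity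
  -- number of cubes
  set N : ℕ := ⌈t / ρ ^ n⌉₊ + 1 with hN_def
  have hN : t < (N : ℝ) * ρ ^ n := by
    have h1 : t / ρ ^ n ≤ (⌈t / ρ ^ n⌉₊ : ℝ) := Nat.le_ceil _
    have h2 : (⌈t / ρ ^ n⌉₊ : ℝ) < N := by rw [hN_def]; push_cast; linarith
    have hρn : (0:ℝ) < ρ ^ n := pow_pos hρ n
    calc t = (t / ρ ^ n) * ρ ^ n := by field_simp
      _ ≤ (⌈t / ρ ^ n⌉₊ : ℝ) * ρ ^ n := by gcongr
      _ < (N : ℝ) * ρ ^ n := by gcongr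
  -- threshold radius
  set D : ℝ := lam * ((N : ℝ) * ρ ^ n) ^ (1/p) with hD_def
  have hD : 0 < D := by
    have : (0:ℝ) < (N : ℝ) * ρ ^ n := lt_trans ht hN
    positivity
  obtain ⟨R₁, hR₁⟩ := eventually_atTop.1 (hlim.eventually_lt_const (show (0:ℝ) < 1/D by positivity))
  set R₀ : ℝ := max R₁ ρ with hR₀_def
  have hR₀ρ : ρ ≤ R₀ := le_max_right _ _
  set d : ℝ := R₀ + ρ + 1 with hd_def
  have hd0 : 0 < d := by have := hR₀ρ; simp only [hd_def]; linarith
  -- centres of the cubes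
  set i0 : Fin n := ⟨0, hn⟩ with hi0_def
  set c : ℕ → En n := fun k => (WithLp.equiv 2 (Fin n → ℝ)).symm
    (fun i => if i = i0 then (k : ℝ) * d else 0) with hc_def
  have hc : ∀ m : ℕ, (c m) i0 = (m : ℝ) * d := fun m => by
    simp [hc_def, WithLp.equiv_symm_apply, PiLp.toLp_apply]
  have hd : ∀ j k : ℕ, j ≠ k → d ≤ |(c j) i0 - (c k) i0| := by
    intro j k hjk
    rw [hc, hc, show (j:ℝ) * d - (k:ℝ) * d = ((j:ℝ) - (k:ℝ)) * d by ring, abs_mul,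
      abs_of_pos hd0]
    have h2 : (1:ℤ) ≤ |(j:ℤ) - (k:ℤ)| := Int.one_le_abs (sub_ne_zero.2 (by exact_mod_cast hjk))
    have h1 : (1:ℝ) ≤ |(j:ℝ) - (k:ℝ)| := by
      calc (1:ℝ) = ((1:ℤ):ℝ) := by norm_num
        _ ≤ ((|(j:ℤ) - (k:ℤ)| : ℤ) : ℝ) := by exact_mod_cast h2
        _ = |(j:ℝ) - (k:ℝ)| := by push_cast; ring_nf
    nlinarith
  -- the union of cubes and the function
  set U : Set (En n) := ⋃ k ∈ Finset.range N, cube n (c k) ρ with hU_def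
  have hUmeas : MeasurableSet U := (Finset.range N).measurableSet_biUnion
    (fun k _ => measurableSet_cube n (c k) ρ)
  set f : En n → ℝ := U.indicator (fun _ => lam) with hf_def
  have hfmeas : Measurable f := measurable_const.indicator hUmeas
  -- disjointness and volume of U
  have hdisj : ((Finset.range N : Finset ℕ) : Set ℕ).PairwiseDisjoint
      (fun k => cube n (c k) ρ) := by
    intro j _ k _ hjk
    rw [Function.onFun, Set.disjoint_left]
    intro y hyj hyk
    have h2 := hyj i0; have h4 := hyk i0
    rw [abs_le] at h2 h4
    have h5 := hd j k hjk
    have hρd : ρ < d := by simp only [hd_def]; linarith [hR₀ρ]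
    rcases abs_cases ((c j) i0 - (c k) i0) with ⟨he, _⟩ | ⟨he, _⟩ <;> rw [he] at h5 <;>
      linarith [h2.1, h2.2, h4.1, h4.2]
  have volU : volume U = ENNReal.ofReal ((N : ℝ) * ρ ^ n) := by
    rw [hU_def, measure_biUnion_finset hdisj (fun k _ => measurableSet_cube n (c k) ρ)]
    simp only [volume_cube n _ hρ.le, Finset.sum_const, Finset.card_range, nsmul_eq_mul]
    rw [← ENNReal.ofReal_natCast N, ← ENNReal.ofReal_mul (Nat.cast_nonneg N)]
  -- at most one cube meets a small cube
  have hone : ∀ (x : En n) (r : ℝ), r + ρ < d → ∀ (j k : ℕ),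
      (cube n x r ∩ cube n (c j) ρ).Nonempty → (cube n x r ∩ cube n (c k) ρ).Nonempty →
      j = k := by
    rintro x r hrd j k ⟨y, hy1, hy2⟩ ⟨z, hz1, hz2⟩
    by_contra hjk
    have h1 := hy1 i0; have h2 := hy2 i0; have h3 := hz1 i0; have h4 := hz2 i0
    rw [abs_le] at h1 h2 h3 h4
    have h5 := hd j k hjk
    rcases abs_cases ((c j) i0 - (c k) i0) with ⟨he, _⟩ | ⟨he, _⟩ <;> rw [he] at h5 <;>
      linarith [h1.1, h1.2, h2.1, h2.2, h3.1, h3.2, h4.1, h4.2]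
  -- the integral of f over any cube
  have hI : ∀ (x : En n) (r : ℝ),
      ∫⁻ y in cube n x r, ENNReal.ofReal (‖f y‖ ^ p) =
        ENNReal.ofReal (lam ^ p) * volume (cube n x r ∩ U) := by
    intro x r
    have hfabs : ∀ y, ENNReal.ofReal (‖f y‖ ^ p) =
        U.indicator (fun _ => ENNReal.ofReal (lam ^ p)) y := by
      intro y
      by_cases hy : y ∈ U
      · simp [hf_def, Set.indicator_of_mem hy, Real.norm_eq_abs, abs_of_pos hlam]
      · simp [hf_def, Set.indicator_of_notMem hy, Real.zero_rpow hp.ne']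
    simp_rw [hfabs]
    rw [lintegral_indicator_const hUmeas, Measure.restrict_apply hUmeas, Set.inter_comm]
  -- norm bound
  have hnorm : morreyNorm n p φ f ≤ 1 := by
    rw [morreyNorm]
    refine iSup_le fun x => iSup_le fun r => iSup_le fun hr => ?_
    rw [volume_cube n x hr.le, hI x r]
    rcases le_total r ρ with hcase | hcase
    · -- small radius
      refine bound_helper (m := r ^ n) hp (hφpos r hr).le hlam.le (by positivity) hr n
        (V := volume (cube n x r ∩ U)) ?_ ?_
      · rw [← volume_cube n x hr.le]
        exact measure_mono Set.inter_subset_left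
      · have e1 : lam ^ p * r ^ n / r ^ n = lam ^ p := by
          field_simp
        rw [e1, rpow_self_inv hlam.le hp]
        have h1 : φ r ≤ φ ρ := (hφmono r ρ hr hcase).1
        calc φ r * lam ≤ φ ρ * lam := by gcongr
          _ = 1/2 := by rw [hlam_def]; field_simp; try ring
          _ ≤ 1 := by norm_num
    · rcases le_total r R₀ with hcase2 | hcase2
      · -- middle radius: at most one cube meets
        have hrρd : r + ρ < d := by simp only [hd_def]; linarith
        have key2 : φ r * (lam ^ p * ρ ^ n / r ^ n) ^ (1/p) ≤ 1 := by
          have hr0 : 0 < r := lt_of_lt_of_le hρ hcase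
          have e1 : lam ^ p * ρ ^ n / r ^ n = lam ^ p * (ρ/r) ^ n := by
            rw [div_pow]; ring
          have e2 : ((ρ/r) ^ n : ℝ) ^ (1/p) = (ρ/r) ^ ((n:ℝ)/p) := by
            rw [← Real.rpow_natCast (ρ/r) n, ← Real.rpow_mul (by positivity), mul_one_div]
          rw [e1, Real.mul_rpow (Real.rpow_nonneg hlam.le p) (by positivity),
            rpow_self_inv hlam.le hp, e2]
          have h1 : φ r ≤ φ ρ * (r/ρ) ^ ((n:ℝ)/p) := (hφmono ρ r hρ hcase).2
          have hprod : (r/ρ) ^ ((n:ℝ)/p) * (ρ/r) ^ ((n:ℝ)/p) = 1 := by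
            rw [← Real.mul_rpow (by positivity) (by positivity),
              show r/ρ * (ρ/r) = 1 by field_simp, Real.one_rpow]
          calc φ r * (lam * (ρ/r) ^ ((n:ℝ)/p))
              ≤ (φ ρ * (r/ρ) ^ ((n:ℝ)/p)) * (lam * (ρ/r) ^ ((n:ℝ)/p)) := by
                have : 0 ≤ lam * (ρ/r) ^ ((n:ℝ)/p) := by positivity
                exact mul_le_mul_of_nonneg_right h1 this
            _ = (φ ρ * lam) * ((r/ρ) ^ ((n:ℝ)/p) * (ρ/r) ^ ((n:ℝ)/p)) := by ring
            _ = 1/2 := by rw [hprod, mul_one, hlam_def]; field_simp; try ring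
            _ ≤ 1 := by norm_num
        by_cases hne : (cube n x r ∩ U).Nonempty
        · obtain ⟨y, hyQ, hyU⟩ := hne
          rw [hU_def] at hyU
          simp only [Set.mem_iUnion] at hyU
          obtain ⟨k, hkN, hyk⟩ := hyU
          refine bound_helper (m := ρ ^ n) hp (hφpos r hr).le hlam.le (by positivity) hr n
            (V := volume (cube n x r ∩ U)) ?_ key2
          have hsub : cube n x r ∩ U ⊆ cube n (c k) ρ := by
            rintro z ⟨hzQ, hzU⟩
            rw [hU_def] at hzU
            simp only [Set.mem_iUnion] at hzU
            obtain ⟨j, hjN, hzj⟩ := hzU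
            have : j = k := hone x r hrρd j k ⟨z, hzQ, hzj⟩ ⟨y, hyQ, hyk⟩
            rwa [this] at hzj
          calc volume (cube n x r ∩ U) ≤ volume (cube n (c k) ρ) := measure_mono hsub
            _ = ENNReal.ofReal (ρ ^ n) := volume_cube n _ hρ.le
        · rw [Set.not_nonempty_iff_eq_empty] at hne
          refine bound_helper (m := ρ ^ n) hp (hφpos r hr).le hlam.le (by positivity) hr n
            (V := volume (cube n x r ∩ U)) ?_ key2
          rw [hne, measure_empty]
          exact zero_le
      · -- large radius
        have hr0 : 0 < r := lt_of_lt_of_le (lt_of_lt_of_le hρ hR₀ρ) hcase2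
        refine bound_helper (m := (N:ℝ) * ρ ^ n) hp (hφpos r hr).le hlam.le
          (show (0:ℝ) ≤ (N:ℝ) * ρ ^ n by positivity) hr n
          (V := volume (cube n x r ∩ U)) ?_ ?_
        · rw [← volU]
          exact measure_mono Set.inter_subset_right
        · have e1 : (lam ^ p * ((N:ℝ) * ρ ^ n) / r ^ n) ^ (1/p) =
              lam * ((N:ℝ) * ρ ^ n) ^ (1/p) / r ^ ((n:ℝ)/p) := by
            rw [Real.div_rpow (by positivity) (by positivity),
              Real.mul_rpow (Real.rpow_nonneg hlam.le p) (by positivity),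
              rpow_self_inv hlam.le hp, ← Real.rpow_natCast r n,
              ← Real.rpow_mul hr0.le, mul_one_div]
          rw [e1]
          have hgr : φ r / r ^ ((n:ℝ)/p) < 1/D := hR₁ r (le_trans (le_max_left _ _) hcase2)
          have hrp : (0:ℝ) < r ^ ((n:ℝ)/p) := Real.rpow_pos_of_pos hr0 _
          calc φ r * (lam * ((N:ℝ) * ρ ^ n) ^ (1/p) / r ^ ((n:ℝ)/p))
              = (φ r / r ^ ((n:ℝ)/p)) * D := by rw [hD_def]; field_simp; try ring
            _ ≤ (1/D) * D := by
                exact mul_le_mul_of_nonneg_right hgr.le hD.le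
            _ = 1 := by field_simp
  -- the rearrangement bound
  have hrearr : ENNReal.ofReal lam ≤ rearr n f t := by
    apply le_sInf
    rintro σ ⟨hσ0, hσvol⟩
    by_contra hlt
    push_neg at hlt
    have hsub : U ⊆ {x : En n | σ < ENNReal.ofReal ‖f x‖} := by
      intro y hy
      have hfy : f y = lam := Set.indicator_of_mem hy _
      simp only [Set.mem_setOf_eq, hfy, Real.norm_eq_abs, abs_of_pos hlam]
      exact hlt
    have hmle := le_trans (measure_mono hsub) hσvol
    rw [volU] at hmle
    have ht2 : ENNReal.ofReal t < ENNReal.ofReal ((N:ℝ) * ρ ^ n) :=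
      (ENNReal.ofReal_lt_ofReal_iff (lt_trans ht hN)).2 hN
    exact absurd hmle (not_le.2 ht2)
  -- conclude
  calc ENNReal.ofReal (1/(2 * φ ρ)) = ENNReal.ofReal lam := by rw [hlam_def]
    _ ≤ rearr n f t := hrearr
    _ ≤ morreyEnvelope n p φ t := by
      rw [morreyEnvelope]
      exact le_iSup_of_le f (le_iSup_of_le hfmeas (le_iSup_of_le hnorm le_rfl))


lemma envelope_upper (n : ℕ) (hn : 0 < n) (p : ℝ) (hp : 0 < p) (φ : ℝ → ℝ) (hφ : GClass n p φ)
    {cc : ℝ} (hcc : 0 < cc) (hccle : ∀ r : ℝ, 1 ≤ r → cc ≤ φ r / r ^ ((n:ℝ)/p)) :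
    morreyEnvelope n p φ 1 ≤ ENNReal.ofReal (1/cc) := by
  rw [morreyEnvelope]
  refine iSup_le fun f => iSup_le fun hfmeas => iSup_le fun hnorm => ?_
  apply sInf_le
  refine ⟨ENNReal.ofReal_pos.2 (by positivity), ?_⟩
  set A : Set (En n) := {x : En n | ENNReal.ofReal (1/cc) < ENNReal.ofReal ‖f x‖} with hA_def
  have hcube : ∀ k : ℕ, volume (A ∩ cube n 0 ((k:ℝ)+1)) ≤ 1 := by
    intro k
    set r : ℝ := (k:ℝ)+1 with hr_def
    have hr : (0:ℝ) < r := by positivity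
    have hr1 : (1:ℝ) ≤ r := by simp only [hr_def]; linarith [Nat.cast_nonneg (α := ℝ) k]
    have hφr : 0 < φ r := hφ.1 r hr
    set I := ∫⁻ y in cube n 0 r, ENNReal.ofReal (‖f y‖ ^ p) with hI_def
    have hterm : ENNReal.ofReal (φ r) * ((volume (cube n 0 r))⁻¹ * I) ^ (1/p) ≤ 1 := by
      refine le_trans ?_ hnorm
      rw [morreyNorm]
      exact le_iSup_of_le 0 (le_iSup_of_le r (le_iSup_of_le hr le_rfl))
    have ha0 : (ENNReal.ofReal (φ r)) ≠ 0 := (ENNReal.ofReal_pos.2 hφr).ne'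
    have hat : (ENNReal.ofReal (φ r)) ≠ ⊤ := ENNReal.ofReal_ne_top
    have hX : ((volume (cube n 0 r))⁻¹ * I) ^ (1/p) ≤ (ENNReal.ofReal (φ r))⁻¹ := by
      calc ((volume (cube n 0 r))⁻¹ * I) ^ (1/p)
          = ((ENNReal.ofReal (φ r))⁻¹ * ENNReal.ofReal (φ r)) *
            ((volume (cube n 0 r))⁻¹ * I) ^ (1/p) := by
            rw [ENNReal.inv_mul_cancel ha0 hat, one_mul]
        _ = (ENNReal.ofReal (φ r))⁻¹ *
            (ENNReal.ofReal (φ r) * ((volume (cube n 0 r))⁻¹ * I) ^ (1/p)) := by ring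
        _ ≤ (ENNReal.ofReal (φ r))⁻¹ * 1 := by gcongr
        _ = (ENNReal.ofReal (φ r))⁻¹ := mul_one _
    have hX2 : (volume (cube n 0 r))⁻¹ * I ≤ (ENNReal.ofReal (φ r ^ p))⁻¹ := by
      have h1 := ENNReal.rpow_le_rpow hX hp.le
      rwa [← ENNReal.rpow_mul, one_div, inv_mul_cancel₀ hp.ne', ENNReal.rpow_one,
        ENNReal.inv_rpow, ENNReal.ofReal_rpow_of_nonneg hφr.le hp.le] at h1
    have hIle : I ≤ ENNReal.ofReal ((1/cc) ^ p) := by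
      have hvol : volume (cube n 0 r) = ENNReal.ofReal (r ^ n) := volume_cube n 0 hr.le
      have hrn : (0:ℝ) < r ^ n := pow_pos hr n
      have h2 : I = volume (cube n 0 r) * ((volume (cube n 0 r))⁻¹ * I) := by
        rw [← mul_assoc, ENNReal.mul_inv_cancel (by rw [hvol]; exact (ENNReal.ofReal_pos.2 hrn).ne')
          (by rw [hvol]; exact ENNReal.ofReal_ne_top), one_mul]
      rw [h2]
      calc volume (cube n 0 r) * ((volume (cube n 0 r))⁻¹ * I)
          ≤ volume (cube n 0 r) * (ENNReal.ofReal (φ r ^ p))⁻¹ := by gcongr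
        _ = ENNReal.ofReal (r ^ n) * (ENNReal.ofReal (φ r ^ p))⁻¹ := by rw [hvol]
        _ = ENNReal.ofReal (r ^ n / φ r ^ p) := by
            rw [← ENNReal.ofReal_inv_of_pos (Real.rpow_pos_of_pos hφr p),
              ← ENNReal.ofReal_mul (by positivity), div_eq_mul_inv]
        _ ≤ ENNReal.ofReal ((1/cc) ^ p) := by
            apply ENNReal.ofReal_le_ofReal
            have hccr : cc * r ^ ((n:ℝ)/p) ≤ φ r := by
              have := hccle r hr1
              rw [le_div_iff₀ (Real.rpow_pos_of_pos hr _)] at this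
              linarith
            have h3 : cc ^ p * r ^ n ≤ φ r ^ p := by
              calc cc ^ p * r ^ n = (cc * r ^ ((n:ℝ)/p)) ^ p := by
                    rw [Real.mul_rpow hcc.le (Real.rpow_nonneg hr.le _),
                      ← Real.rpow_natCast r n, ← Real.rpow_mul hr.le, div_mul_cancel₀]
                    exact hp.ne'
                _ ≤ φ r ^ p := Real.rpow_le_rpow (by positivity) hccr hp.le
            rw [Real.div_rpow (by norm_num) hcc.le, Real.one_rpow]
            rw [div_le_div_iff₀ (Real.rpow_pos_of_pos hφr p) (Real.rpow_pos_of_pos hcc p)]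
            nlinarith [Real.rpow_pos_of_pos hcc p, pow_pos hr n]
    have hcheb : ENNReal.ofReal ((1/cc) ^ p) * volume (A ∩ cube n 0 r) ≤ I := by
      have hmeasg : Measurable fun y : En n => ENNReal.ofReal (‖f y‖ ^ p) :=
        ENNReal.measurable_ofReal.comp
          ((Real.continuous_rpow_const hp.le).measurable.comp hfmeas.norm)
      calc ENNReal.ofReal ((1/cc) ^ p) * volume (A ∩ cube n 0 r)
          = ∫⁻ _ in A ∩ cube n 0 r, ENNReal.ofReal ((1/cc) ^ p) := by
            rw [setLIntegral_const]
        _ ≤ ∫⁻ y in A ∩ cube n 0 r, ENNReal.ofReal (‖f y‖ ^ p) := by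
            refine setLIntegral_mono hmeasg fun y hy => ?_
            have h1 : 1/cc < ‖f y‖ := by
              have h2 : y ∈ A := hy.1
              rw [hA_def, Set.mem_setOf_eq] at h2
              exact (ENNReal.ofReal_lt_ofReal_iff_of_nonneg (by positivity)).1 h2
            exact ENNReal.ofReal_le_ofReal (Real.rpow_le_rpow (by positivity) h1.le hp.le)
        _ ≤ I := lintegral_mono_set Set.inter_subset_right
    have hcp0 : ENNReal.ofReal ((1/cc) ^ p) ≠ 0 :=
      (ENNReal.ofReal_pos.2 (by positivity)).ne'
    have hcpt : ENNReal.ofReal ((1/cc) ^ p) ≠ ⊤ := ENNReal.ofReal_ne_top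
    have := le_trans hcheb hIle
    calc volume (A ∩ cube n 0 r)
        = (ENNReal.ofReal ((1/cc) ^ p))⁻¹ * (ENNReal.ofReal ((1/cc) ^ p) *
          volume (A ∩ cube n 0 r)) := by
          rw [← mul_assoc, ENNReal.inv_mul_cancel hcp0 hcpt, one_mul]
      _ ≤ (ENNReal.ofReal ((1/cc) ^ p))⁻¹ * ENNReal.ofReal ((1/cc) ^ p) := by gcongr
      _ = 1 := ENNReal.inv_mul_cancel hcp0 hcpt
  have hAmeas : MeasurableSet A :=
    measurableSet_lt measurable_const (ENNReal.measurable_ofReal.comp hfmeas.norm)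
  have hAunion : A = ⋃ k : ℕ, (A ∩ cube n 0 ((k:ℝ)+1)) := by
    ext y
    simp only [Set.mem_iUnion, Set.mem_inter_iff]
    constructor
    · intro hy
      set M : ℝ := ∑ i : Fin n, |y i| with hM_def
      have hM : ∀ i : Fin n, |y i| ≤ M := fun i =>
        Finset.single_le_sum (f := fun i => |y i|) (fun j _ => abs_nonneg _) (Finset.mem_univ i)
      obtain ⟨k, hk⟩ := exists_nat_ge (2*M)
      refine ⟨k, hy, fun i => ?_⟩
      have h0 : (0 : En n) i = 0 := rfl
      rw [h0, sub_zero]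
      have := hM i
      have hM0 : 0 ≤ M := Finset.sum_nonneg fun j _ => abs_nonneg _
      linarith
    · rintro ⟨k, hk, _⟩
      exact hk
  have hmono : Monotone (fun k : ℕ => A ∩ cube n 0 ((k:ℝ)+1)) := by
    intro a b hab
    refine Set.inter_subset_inter_right _ fun y hy i => ?_
    have := hy i
    have hab' : (a:ℝ) ≤ b := Nat.cast_le.2 hab
    linarith
  rw [ENNReal.ofReal_one, hAunion, hmono.measure_iUnion]
  exact iSup_le hcube

end Helpers

/-- If `lim_{t→0⁺} φ(t)=0`, then the growth envelope function of
`ℳ_{φ,p}(ℝⁿ)` is identically `∞` on `(0,∞)` iff `lim_{t→∞} t^{-n/p} φ(t) = 0`. -/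
theorem statement6 (n : ℕ) (hn : 0 < n) (p : ℝ) (hp : 0 < p) (φ : ℝ → ℝ)
    (hφ : GClass n p φ) (hφ1 : φ 1 = 1)
    (hφ0 : Filter.Tendsto φ (nhdsWithin 0 (Set.Ioi 0)) (nhds 0)) :
    (∀ t : ℝ, 0 < t → morreyEnvelope n p φ t = ⊤) ↔
      Filter.Tendsto (fun t : ℝ => φ t / t ^ ((n : ℝ) / p)) Filter.atTop (nhds 0) := by
  have ganti : ∀ a b : ℝ, 0 < a → a ≤ b → φ b / b ^ ((n:ℝ)/p) ≤ φ a / a ^ ((n:ℝ)/p) := by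
    intro a b ha hab
    have hb : 0 < b := lt_of_lt_of_le ha hab
    have h2 := (hφ.2 a b ha hab).2
    have e : (b/a) ^ ((n:ℝ)/p) = b ^ ((n:ℝ)/p) / a ^ ((n:ℝ)/p) := Real.div_rpow hb.le ha.le _
    have ha' := Real.rpow_pos_of_pos ha ((n:ℝ)/p)
    have hb' := Real.rpow_pos_of_pos hb ((n:ℝ)/p)
    rw [div_le_div_iff₀ hb' ha']
    calc φ b * a ^ ((n:ℝ)/p)
        ≤ (φ a * (b ^ ((n:ℝ)/p) / a ^ ((n:ℝ)/p))) * a ^ ((n:ℝ)/p) := by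
          rw [← e]; exact mul_le_mul_of_nonneg_right h2 ha'.le
      _ = φ a * b ^ ((n:ℝ)/p) := by field_simp
  constructor
  · intro H
    by_contra hcon
    have hex : ∃ cc > 0, ∀ r : ℝ, 1 ≤ r → cc ≤ φ r / r ^ ((n:ℝ)/p) := by
      by_contra hc
      push_neg at hc
      apply hcon
      rw [NormedAddCommGroup.tendsto_nhds_zero]
      intro ε hε
      obtain ⟨r₀, hr₀1, hr₀⟩ := hc ε hε
      filter_upwards [eventually_ge_atTop r₀] with r hr
      have h01 : (0:ℝ) < r₀ := lt_of_lt_of_le one_pos hr₀1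
      have hr0 : (0:ℝ) < r := lt_of_lt_of_le h01 hr
      have hle : φ r / r ^ ((n:ℝ)/p) ≤ φ r₀ / r₀ ^ ((n:ℝ)/p) := ganti r₀ r h01 hr
      have hpos : 0 < φ r / r ^ ((n:ℝ)/p) :=
        div_pos (hφ.1 r hr0) (Real.rpow_pos_of_pos hr0 _)
      rw [Real.norm_eq_abs, abs_of_pos hpos]
      linarith
    obtain ⟨cc, hcc, hccle⟩ := hex
    have h1 := envelope_upper n hn p hp φ hφ hcc hccle
    rw [H 1 one_pos] at h1
    exact ENNReal.ofReal_ne_top (top_le_iff.1 h1)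
  · intro hlim t ht
    have key : ∀ M : ℝ, 0 < M → ENNReal.ofReal M ≤ morreyEnvelope n p φ t := by
      intro M hM
      have hev : ∀ᶠ ρ in nhdsWithin 0 (Set.Ioi 0), φ ρ < 1/(2*M) :=
        hφ0.eventually_lt_const (by positivity)
      obtain ⟨ρ, hρφ, hρ0⟩ := (hev.and eventually_mem_nhdsWithin).exists
      rw [Set.mem_Ioi] at hρ0
      have hφρ := hφ.1 ρ hρ0
      have hMlam : M ≤ 1/(2 * φ ρ) := by
        rw [le_div_iff₀ (by positivity)]
        nlinarith [(lt_div_iff₀ (show (0:ℝ) < 2*M by positivity)).1 hρφ]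
      exact le_trans (ENNReal.ofReal_le_ofReal hMlam)
        (construction n hn p hp φ hφ hlim ht hρ0)
    by_contra hne
    set E := morreyEnvelope n p φ t with hE_def
    have h2 := key (E.toReal + 1) (by positivity)
    have h3 : ENNReal.ofReal (E.toReal + 1) ≤ ENNReal.ofReal E.toReal := by
      rw [ENNReal.ofReal_toReal hne]; exact h2
    have h4 := (ENNReal.ofReal_le_ofReal_iff (by positivity)).1 h3
    linarith [ENNReal.toReal_nonneg (a := E)]
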